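/- arXiv:math-ph/0305029 — 2 statements merged into one kernel-verified Lean document; each statement's English description precedes it below -/
import Mathlib

section
/- For every integer N ≥ 1 one has r̄_N r_{N−1} − r_N r̄_{N−1} = −2μ/√t; equivalently, the quantity L_N := r̄_N r_{N−1} − r_N r̄_{N−1} is constant in N and equal to −2μ/√t. -/
open scoped BigOperators

/-- The modified Bessel function of the first kind,
`I_α(x) = Σ_{m=0}^∞ (x/2)^(2m+α) / (m! · Γ(α+m+1))`,
with `1/Γ` interpreted via the entire reciprocal Gamma function
(Mathlib's `Real.Gamma` vanishes at the poles). -/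
noncomputable def besselI (α x : ℝ) : ℝ :=
  ∑' m : ℕ, (x / 2) ^ (2 * (m : ℝ) + α) / ((m.factorial : ℝ) * Real.Gamma (α + m + 1))

/-- The Toeplitz determinant `D^ε_N(t) = det[ I_{μ+ε+j−k}(√t) ]_{1≤j,k≤N}`,
with `D^ε_0(t) = 1` (the empty determinant). -/
noncomputable def toeplitzDet (μ : ℝ) (ε : ℤ) (N : ℕ) (t : ℝ) : ℝ :=
  Matrix.det (Matrix.of fun j k : Fin N =>
    besselI (μ + ε + ((j : ℕ) : ℝ) - ((k : ℕ) : ℝ)) (Real.sqrt t))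

/-- The reflection coefficient `r_N(t) = (−1)^N D^1_N(t)/D^0_N(t)`. -/
noncomputable def rcoef (μ : ℝ) (N : ℕ) (t : ℝ) : ℝ :=
  (-1) ^ N * toeplitzDet μ 1 N t / toeplitzDet μ 0 N t

/-- The reflection coefficient `r̄_N(t) = (−1)^N D^{−1}_N(t)/D^0_N(t)`. -/
noncomputable def rbcoef (μ : ℝ) (N : ℕ) (t : ℝ) : ℝ :=
  (-1) ^ N * toeplitzDet μ (-1) N t / toeplitzDet μ 0 N t



/-- Toeplitz matrix built from a "moment" function `c`. -/
noncomputable def tM (c : ℝ → ℝ) (e : ℝ) (m : ℕ) : Matrix (Fin m) (Fin m) ℝ :=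
  Matrix.of fun j k => c (e + ((j : ℕ) : ℝ) - ((k : ℕ) : ℝ))

lemma toeplitz_key (c : ℝ → ℝ) (a b : ℝ)
    (hrec : ∀ s : ℝ, c (-1 + s) - c (1 + s) = a * c s + b * (s * c s)) (n : ℕ) :
    (tM c (-1) (n + 1)).det * (tM c 1 n).det - (tM c 1 (n + 1)).det * (tM c (-1) n).det
      = a * ((tM c 0 (n + 1)).det * (tM c 0 n).det) := by
  classical
  set A := tM c 0 (n + 1) with hA
  set B := A.adjugate with hB
  set Mneg := tM c (-1) (n + 1) with hMn
  set Mpos := tM c 1 (n + 1) with hMp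
  have hAB : A * B = A.det • 1 := Matrix.mul_adjugate A
  have hBA : B * A = A.det • 1 := Matrix.adjugate_mul A
  set aN : Fin (n + 1) → ℝ := fun j => c (((j : ℕ) : ℝ) - (n + 1)) with haN
  set bN : Fin (n + 1) → ℝ := fun k => c ((n + 1) - ((k : ℕ) : ℝ)) with hbN
  -- value of `k+1` for `k ≠ last`
  have hval : ∀ k : Fin (n + 1), k ≠ Fin.last n → ((k + 1 : Fin (n + 1)) : ℕ) = (k : ℕ) + 1 := by
    intro k hk
    rw [Fin.val_add_one]
    simp [hk]
  have hne0 : ∀ k : Fin (n + 1), k ≠ Fin.last n → (k + 1 : Fin (n + 1)) ≠ 0 := by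
    intro k hk h
    have := hval k hk
    rw [h] at this
    simp at this
  -- ① column structure of Mneg
  have hMnegcol : ∀ (j k : Fin (n + 1)), k ≠ Fin.last n → Mneg j k = A j (k + 1) := by
    intro j k hk
    show c (-1 + ((j : ℕ) : ℝ) - ((k : ℕ) : ℝ))
        = c (0 + ((j : ℕ) : ℝ) - (((k + 1 : Fin (n + 1)) : ℕ) : ℝ))
    rw [hval k hk]
    congr 1
    push_cast
    ring
  -- ② (B * Mneg) 0 k = 0 for k ≠ last
  have hBMneg0 : ∀ k : Fin (n + 1), k ≠ Fin.last n → (B * Mneg) 0 k = 0 := by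
    intro k hk
    calc (B * Mneg) 0 k = ∑ j, B 0 j * Mneg j k := Matrix.mul_apply
      _ = ∑ j, B 0 j * A j (k + 1) :=
          Finset.sum_congr rfl fun j _ => by rw [hMnegcol j k hk]
      _ = (B * A) 0 (k + 1) := (Matrix.mul_apply).symm
      _ = 0 := by
          rw [hBA, Matrix.smul_apply, Matrix.one_apply_ne (Ne.symm (hne0 k hk))]
          simp
  -- ③ collapse of (B * Mneg * B) 0 0
  have hstep1 : (B * Mneg * B) 0 0 = (B * Mneg) 0 (Fin.last n) * B (Fin.last n) 0 := by
    rw [Matrix.mul_apply]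
    apply Finset.sum_eq_single (Fin.last n)
    · intro k _ hk
      rw [hBMneg0 k hk, zero_mul]
    · intro h
      exact absurd (Finset.mem_univ _) h
  -- ④ Cramer for the last column of Mneg
  have hlastcol : ∀ j, Mneg j (Fin.last n) = aN j := by
    intro j
    show c (-1 + ((j : ℕ) : ℝ) - ((Fin.last n : ℕ) : ℝ)) = c (((j : ℕ) : ℝ) - (n + 1))
    rw [Fin.val_last]
    congr 1
    push_cast
    ring
  have hcram1 : (B * Mneg) 0 (Fin.last n) = (A.updateCol 0 aN).det := by
    have h1 : (B * Mneg) 0 (Fin.last n) = (Matrix.mulVec B aN) 0 := by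
      rw [Matrix.mul_apply]
      simp only [Matrix.mulVec, dotProduct]
      exact Finset.sum_congr rfl fun j _ => by rw [hlastcol j]
    rw [h1, hB, ← Matrix.cramer_eq_adjugate_mulVec, Matrix.cramer_apply]
  -- ⑤ rotation: updateColumn vs Mneg
  have hrot1 : Mneg = (A.updateCol 0 aN).submatrix id (finRotate (n + 1)) := by
    ext j k
    rw [Matrix.submatrix_apply, id_eq, finRotate_succ_apply]
    by_cases hk : k = Fin.last n
    · subst hk
      rw [Fin.last_add_one, Matrix.updateCol_self]
      exact hlastcol j
    · rw [Matrix.updateCol_ne (hne0 k hk)]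
      exact hMnegcol j k hk
  have hsq : (-1 : ℝ) ^ n * (-1 : ℝ) ^ n = 1 := by
    rw [← pow_add, ← two_mul, pow_mul]
    norm_num
  have hdetrot1 : (A.updateCol 0 aN).det = (-1 : ℝ) ^ n * Mneg.det := by
    have h := Matrix.det_permute' (finRotate (n + 1)) (A.updateCol 0 aN)
    rw [← hrot1, sign_finRotate] at h
    have h' : Mneg.det = (-1 : ℝ) ^ n * (A.updateCol 0 aN).det := by
      rw [h]; norm_num
    rw [h', ← mul_assoc, hsq, one_mul]
  -- ⑥ B last 0 as a size-n Toeplitz determinant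
  have hBlast0 : B (Fin.last n) 0 = (-1 : ℝ) ^ n * (tM c 1 n).det := by
    rw [hB, Matrix.adjugate_apply, Matrix.det_succ_row_zero,
      Finset.sum_eq_single (Fin.last n)]
    · have hsubm : (A.updateRow 0 (Pi.single (Fin.last n) 1)).submatrix Fin.succ
          (Fin.last n).succAbove = tM c 1 n := by
        ext j k
        rw [Matrix.submatrix_apply, Fin.succAbove_last_apply,
          Matrix.updateRow_ne (Fin.succ_ne_zero j)]
        show c (0 + ((j.succ : ℕ) : ℝ) - ((k.castSucc : ℕ) : ℝ))
            = c (1 + ((j : ℕ) : ℝ) - ((k : ℕ) : ℝ))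
        rw [Fin.val_succ, Fin.coe_castSucc]
        congr 1
        push_cast
        ring
      rw [hsubm, Matrix.updateRow_self, Pi.single_eq_same, Fin.val_last, mul_one]
    · intro j _ hj
      rw [Matrix.updateRow_self, Pi.single_eq_of_ne hj, mul_zero, zero_mul]
    · intro h
      exact absurd (Finset.mem_univ _) h
  -- ⑦ row structure of Mpos
  have hMposrow : ∀ (j k : Fin (n + 1)), j ≠ Fin.last n → Mpos j k = A (j + 1) k := by
    intro j k hj
    show c (1 + ((j : ℕ) : ℝ) - ((k : ℕ) : ℝ))
        = c (0 + (((j + 1 : Fin (n + 1)) : ℕ) : ℝ) - ((k : ℕ) : ℝ))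
    rw [hval j hj]
    congr 1
    push_cast
    ring
  have hMposB0 : ∀ j : Fin (n + 1), j ≠ Fin.last n → (Mpos * B) j 0 = 0 := by
    intro j hj
    calc (Mpos * B) j 0 = ∑ k, Mpos j k * B k 0 := Matrix.mul_apply
      _ = ∑ k, A (j + 1) k * B k 0 :=
          Finset.sum_congr rfl fun k _ => by rw [hMposrow j k hj]
      _ = (A * B) (j + 1) 0 := (Matrix.mul_apply).symm
      _ = 0 := by
          rw [hAB, Matrix.smul_apply, Matrix.one_apply_ne (hne0 j hj)]
          simp
  have hstep2 : (B * (Mpos * B)) 0 0 = B 0 (Fin.last n) * (Mpos * B) (Fin.last n) 0 := by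
    rw [Matrix.mul_apply]
    apply Finset.sum_eq_single (Fin.last n)
    · intro j _ hj
      rw [hMposB0 j hj, mul_zero]
    · intro h
      exact absurd (Finset.mem_univ _) h
  have hlastrow : ∀ k, Mpos (Fin.last n) k = bN k := by
    intro k
    show c (1 + ((Fin.last n : ℕ) : ℝ) - ((k : ℕ) : ℝ)) = c ((n + 1) - ((k : ℕ) : ℝ))
    rw [Fin.val_last]
    congr 1
    push_cast
    ring
  have hcram2 : (Mpos * B) (Fin.last n) 0 = (A.updateRow 0 bN).det := by
    have h1 : (Mpos * B) (Fin.last n) 0 = (Matrix.vecMul bN B) 0 := by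
      rw [Matrix.mul_apply]
      simp only [Matrix.vecMul, dotProduct]
      exact Finset.sum_congr rfl fun k _ => by rw [hlastrow k]
    rw [h1, hB, ← Matrix.mulVec_transpose, Matrix.adjugate_transpose,
      ← Matrix.cramer_eq_adjugate_mulVec, Matrix.cramer_apply,
      Matrix.updateCol_transpose, Matrix.det_transpose]
  have hrot2 : Mpos = (A.updateRow 0 bN).submatrix (finRotate (n + 1)) id := by
    ext j k
    rw [Matrix.submatrix_apply, id_eq, finRotate_succ_apply]
    by_cases hj : j = Fin.last n
    · subst hj
      rw [Fin.last_add_one, Matrix.updateRow_self]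
      exact hlastrow k
    · rw [Matrix.updateRow_ne (hne0 j hj)]
      exact hMposrow j k hj
  have hdetrot2 : (A.updateRow 0 bN).det = (-1 : ℝ) ^ n * Mpos.det := by
    have h := Matrix.det_permute (finRotate (n + 1)) (A.updateRow 0 bN)
    rw [← hrot2, sign_finRotate] at h
    have h' : Mpos.det = (-1 : ℝ) ^ n * (A.updateRow 0 bN).det := by
      rw [h]; norm_num
    rw [h', ← mul_assoc, hsq, one_mul]
  -- ⑧ B 0 last
  have hB0last : B 0 (Fin.last n) = (-1 : ℝ) ^ n * (tM c (-1) n).det := by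
    rw [hB, Matrix.adjugate_apply, Matrix.det_succ_row _ (Fin.last n),
      Finset.sum_eq_single 0]
    · have hsubm : (A.updateRow (Fin.last n) (Pi.single 0 1)).submatrix
          (Fin.last n).succAbove (0 : Fin (n + 1)).succAbove = tM c (-1) n := by
        ext j k
        rw [Matrix.submatrix_apply, Fin.succAbove_last_apply, Fin.succAbove_zero_apply,
          Matrix.updateRow_ne (Fin.castSucc_lt_last j).ne]
        show c (0 + ((j.castSucc : ℕ) : ℝ) - ((k.succ : ℕ) : ℝ))
            = c (-1 + ((j : ℕ) : ℝ) - ((k : ℕ) : ℝ))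
        rw [Fin.val_succ, Fin.coe_castSucc]
        congr 1
        push_cast
        ring
      rw [hsubm, Matrix.updateRow_self, Pi.single_eq_same, Fin.val_last, Fin.val_zero,
        Nat.add_zero, mul_one]
    · intro j _ hj
      rw [Matrix.updateRow_self, Pi.single_eq_of_ne hj, mul_zero, zero_mul]
    · intro h
      exact absurd (Finset.mem_univ _) h
  -- ⑨ B 0 0
  have hB00 : B 0 0 = (tM c 0 n).det := by
    rw [hB, Matrix.adjugate_apply, Matrix.det_succ_row_zero, Finset.sum_eq_single 0]
    · have hsubm : (A.updateRow 0 (Pi.single 0 1)).submatrix Fin.succ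
          (0 : Fin (n + 1)).succAbove = tM c 0 n := by
        ext j k
        rw [Matrix.submatrix_apply, Fin.succAbove_zero_apply,
          Matrix.updateRow_ne (Fin.succ_ne_zero j)]
        show c (0 + ((j.succ : ℕ) : ℝ) - ((k.succ : ℕ) : ℝ))
            = c (0 + ((j : ℕ) : ℝ) - ((k : ℕ) : ℝ))
        rw [Fin.val_succ, Fin.val_succ]
        congr 1
        push_cast
        ring
      rw [hsubm, Matrix.updateRow_self, Pi.single_eq_same]
      norm_num
    · intro j _ hj
      rw [Matrix.updateRow_self, Pi.single_eq_of_ne hj, mul_zero, zero_mul]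
    · intro h
      exact absurd (Finset.mem_univ _) h
  -- ⑩ the recurrence as a matrix identity
  set Dg : Matrix (Fin (n + 1)) (Fin (n + 1)) ℝ :=
    Matrix.diagonal (fun j : Fin (n + 1) => ((j : ℕ) : ℝ)) with hDg
  have hMdiff : Mneg - Mpos = a • A + b • (Dg * A - A * Dg) := by
    ext j k
    have h := hrec (((j : ℕ) : ℝ) - ((k : ℕ) : ℝ))
    have e1 : (-1 : ℝ) + (((j : ℕ) : ℝ) - ((k : ℕ) : ℝ)) = -1 + ((j : ℕ) : ℝ) - ((k : ℕ) : ℝ) := by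
      ring
    have e2 : (1 : ℝ) + (((j : ℕ) : ℝ) - ((k : ℕ) : ℝ)) = 1 + ((j : ℕ) : ℝ) - ((k : ℕ) : ℝ) := by
      ring
    rw [e1, e2] at h
    simp only [Matrix.sub_apply, Matrix.add_apply, Matrix.smul_apply, smul_eq_mul,
      Matrix.mul_sub, Matrix.sub_apply]
    show c (-1 + ((j : ℕ) : ℝ) - ((k : ℕ) : ℝ)) - c (1 + ((j : ℕ) : ℝ) - ((k : ℕ) : ℝ))
        = a * A j k + b * ((Dg * A) j k - (A * Dg) j k)
    rw [Matrix.diagonal_mul, Matrix.mul_diagonal]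
    show _ = a * c (0 + ((j : ℕ) : ℝ) - ((k : ℕ) : ℝ))
        + b * (((j : ℕ) : ℝ) * c (0 + ((j : ℕ) : ℝ) - ((k : ℕ) : ℝ))
            - c (0 + ((j : ℕ) : ℝ) - ((k : ℕ) : ℝ)) * ((k : ℕ) : ℝ))
    have e3 : (0 : ℝ) + ((j : ℕ) : ℝ) - ((k : ℕ) : ℝ) = ((j : ℕ) : ℝ) - ((k : ℕ) : ℝ) := by ring
    rw [e3, h]
    ring
  -- ⑪ sandwich evaluation
  have hBAB : B * A * B = A.det • B := by
    rw [hBA, Matrix.smul_mul, Matrix.one_mul]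
  have hBDgAB : B * (Dg * A) * B = A.det • (B * Dg) := by
    rw [← Matrix.mul_assoc B Dg A, Matrix.mul_assoc (B * Dg) A B, hAB,
      Matrix.mul_smul, Matrix.mul_one]
  have hBADgB : B * (A * Dg) * B = A.det • (Dg * B) := by
    rw [← Matrix.mul_assoc B A Dg, hBA, Matrix.smul_mul, Matrix.one_mul,
      Matrix.smul_mul]
  have hsand : (B * (Mneg - Mpos) * B) 0 0 = a * (A.det * B 0 0) := by
    rw [hMdiff]
    have expand : B * (a • A + b • (Dg * A - A * Dg)) * B
        = a • (B * A * B) + b • (B * (Dg * A) * B - B * (A * Dg) * B) := by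
      rw [Matrix.mul_add, Matrix.add_mul, Matrix.mul_smul, Matrix.smul_mul,
        Matrix.mul_smul, Matrix.smul_mul, Matrix.mul_sub, Matrix.sub_mul]
    rw [expand, hBAB, hBDgAB, hBADgB]
    have hBDg : (B * Dg) 0 0 = 0 := by
      rw [hDg, Matrix.mul_diagonal]
      simp
    have hDgB : (Dg * B) 0 0 = 0 := by
      rw [hDg, Matrix.diagonal_mul]
      simp
    simp only [Matrix.add_apply, Matrix.smul_apply, Matrix.sub_apply, smul_eq_mul,
      hBDg, hDgB]
    ring
  -- ⑫ assemble
  have h2 : (B * Mneg * B) 0 0 = Mneg.det * (tM c 1 n).det := by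
    rw [hstep1, hcram1, hdetrot1, hBlast0]
    calc ((-1 : ℝ) ^ n * Mneg.det) * ((-1 : ℝ) ^ n * (tM c 1 n).det)
        = ((-1 : ℝ) ^ n * (-1 : ℝ) ^ n) * (Mneg.det * (tM c 1 n).det) := by ring
      _ = Mneg.det * (tM c 1 n).det := by rw [hsq, one_mul]
  have h3 : (B * Mpos * B) 0 0 = (tM c (-1) n).det * Mpos.det := by
    rw [Matrix.mul_assoc, hstep2, hcram2, hdetrot2, hB0last]
    calc ((-1 : ℝ) ^ n * (tM c (-1) n).det) * ((-1 : ℝ) ^ n * Mpos.det)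
        = ((-1 : ℝ) ^ n * (-1 : ℝ) ^ n) * ((tM c (-1) n).det * Mpos.det) := by ring
      _ = (tM c (-1) n).det * Mpos.det := by rw [hsq, one_mul]
  have h1 : (B * (Mneg - Mpos) * B) 0 0 = (B * Mneg * B) 0 0 - (B * Mpos * B) 0 0 := by
    rw [Matrix.mul_sub, Matrix.sub_mul, Matrix.sub_apply]
  have key : Mneg.det * (tM c 1 n).det - (tM c (-1) n).det * Mpos.det
      = a * (A.det * (tM c 0 n).det) := by
    rw [← h2, ← h3, ← h1, hsand, hB00]
  calc Mneg.det * (tM c 1 n).det - Mpos.det * (tM c (-1) n).det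
      = Mneg.det * (tM c 1 n).det - (tM c (-1) n).det * Mpos.det := by ring
    _ = a * (A.det * (tM c 0 n).det) := key

lemma inv_Gamma_succ (z : ℝ) : (Real.Gamma z)⁻¹ = z * (Real.Gamma (z + 1))⁻¹ := by
  by_cases hz : z = 0
  · simp [hz, Real.Gamma_zero]
  · rw [Real.Gamma_add_one hz]
    by_cases hG : Real.Gamma z = 0
    · simp [hG]
    · rw [mul_inv, ← mul_assoc, mul_inv_cancel₀ hz, one_mul]

lemma besselI_summable {x : ℝ} (hx : 0 < x) (α : ℝ) :
    Summable (fun m : ℕ =>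
      (x / 2) ^ (2 * (m : ℝ) + α) / ((m.factorial : ℝ) * Real.Gamma (α + m + 1))) := by
  have hx2 : 0 < x / 2 := by linarith
  apply summable_of_ratio_norm_eventually_le (r := 1 / 2) (by norm_num)
  filter_upwards [Filter.eventually_ge_atTop (⌈|α|⌉₊ + ⌈(x / 2) ^ 2 * 2⌉₊)] with m hm
  have hm1 : (⌈|α|⌉₊ : ℝ) ≤ (m : ℝ) := by exact_mod_cast le_trans (Nat.le_add_right _ _) hm
  have hm2 : (⌈(x / 2) ^ 2 * 2⌉₊ : ℝ) ≤ (m : ℝ) := by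
    exact_mod_cast le_trans (Nat.le_add_left _ _) hm
  have hα : |α| ≤ (m : ℝ) := le_trans (Nat.le_ceil _) hm1
  have hxm : (x / 2) ^ 2 * 2 ≤ (m : ℝ) := le_trans (Nat.le_ceil _) hm2
  have hs1 : (1 : ℝ) ≤ α + m + 1 := by
    have := abs_le.mp hα
    linarith [this.1]
  have hs0 : (0 : ℝ) < α + m + 1 := by linarith
  have hGpos : 0 < Real.Gamma (α + m + 1) := Real.Gamma_pos_of_pos hs0
  have hfac : (0 : ℝ) < (m.factorial : ℝ) := by exact_mod_cast m.factorial_pos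
  have hPpos : 0 < (x / 2) ^ (2 * (m : ℝ) + α) := Real.rpow_pos_of_pos hx2 _
  -- rewrite the (m+1)-st term
  have hexp : 2 * ((m + 1 : ℕ) : ℝ) + α = (2 * (m : ℝ) + α) + 2 := by push_cast; ring
  have hgam : α + ((m + 1 : ℕ) : ℝ) + 1 = (α + m + 1) + 1 := by push_cast; ring
  have hterm : (x / 2) ^ (2 * ((m + 1 : ℕ) : ℝ) + α) /
        (((m + 1).factorial : ℝ) * Real.Gamma (α + ((m + 1 : ℕ) : ℝ) + 1))
      = ((x / 2) ^ (2 : ℝ) / (((m : ℝ) + 1) * (α + m + 1))) *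
        ((x / 2) ^ (2 * (m : ℝ) + α) / ((m.factorial : ℝ) * Real.Gamma (α + m + 1))) := by
    rw [hexp, hgam, Real.rpow_add hx2, Real.Gamma_add_one (ne_of_gt hs0),
      Nat.factorial_succ]
    push_cast
    field_simp
  rw [hterm]
  have hrat : 0 < ((m : ℝ) + 1) * (α + m + 1) := by positivity
  rw [norm_mul]
  have hco : ‖(x / 2) ^ (2 : ℝ) / (((m : ℝ) + 1) * (α + m + 1))‖ ≤ 1 / 2 := by
    rw [Real.norm_eq_abs, abs_of_nonneg (by positivity)]
    rw [div_le_div_iff₀ hrat (by norm_num)]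
    have h2 : (x / 2) ^ (2 : ℝ) = (x / 2) ^ (2 : ℕ) := by
      rw [← Real.rpow_natCast]; norm_num
    rw [h2]
    nlinarith [hs1, hxm, Nat.cast_nonneg (α := ℝ) m]
  calc ‖(x / 2) ^ (2 : ℝ) / (((m : ℝ) + 1) * (α + m + 1))‖ *
        ‖(x / 2) ^ (2 * (m : ℝ) + α) / ((m.factorial : ℝ) * Real.Gamma (α + m + 1))‖
      ≤ 1 / 2 * ‖(x / 2) ^ (2 * (m : ℝ) + α) / ((m.factorial : ℝ) * Real.Gamma (α + m + 1))‖ := by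
        apply mul_le_mul_of_nonneg_right hco (norm_nonneg _)

lemma besselI_rec {x : ℝ} (hx : 0 < x) (α : ℝ) :
    besselI (α - 1) x - besselI (α + 1) x = 2 * α / x * besselI α x := by
  have hx2 : 0 < x / 2 := by linarith
  have hxne : x ≠ 0 := ne_of_gt hx
  set f : ℕ → ℝ := fun m =>
    (x / 2) ^ (2 * (m : ℝ) + (α - 1)) / ((m.factorial : ℝ) * Real.Gamma ((α - 1) + m + 1)) with hf
  set g : ℕ → ℝ := fun m =>
    (2 * α / x) * ((x / 2) ^ (2 * (m : ℝ) + α) / ((m.factorial : ℝ) * Real.Gamma (α + m + 1)))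
    with hg
  have hsf : Summable f := besselI_summable hx (α - 1)
  have hsα : Summable (fun m : ℕ =>
      (x / 2) ^ (2 * (m : ℝ) + α) / ((m.factorial : ℝ) * Real.Gamma (α + m + 1))) :=
    besselI_summable hx α
  have hsg : Summable g := hsα.mul_left _
  have hsh : Summable (fun m => f m - g m) := hsf.sub hsg
  -- pointwise identity: f m - g m = h m
  have hpoint : ∀ m : ℕ, f m - g m =
      (m : ℝ) * ((x / 2) ^ (2 * (m : ℝ) + α - 1) / ((m.factorial : ℝ) * Real.Gamma (α + m + 1))) := by
    intro m
    have e1 : (α - 1) + (m : ℝ) + 1 = α + m := by ring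
    have e2 : 2 * (m : ℝ) + (α - 1) = 2 * (m : ℝ) + α - 1 := by ring
    have e3 : (x / 2) ^ (2 * (m : ℝ) + α) = (x / 2) ^ (2 * (m : ℝ) + α - 1) * (x / 2) := by
      have h := Real.rpow_add hx2 (2 * (m : ℝ) + α - 1) 1
      rw [Real.rpow_one] at h
      calc (x / 2) ^ (2 * (m : ℝ) + α) = (x / 2) ^ (2 * (m : ℝ) + α - 1 + 1) := by
            congr 1; ring
        _ = _ := h
    have e4 : (Real.Gamma (α + m))⁻¹ = (α + m) * (Real.Gamma (α + m + 1))⁻¹ :=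
      inv_Gamma_succ (α + m)
    simp only [hf, hg, e1, e2, e3]
    rw [div_eq_mul_inv, mul_inv, e4]
    field_simp [hxne]
    ring_nf
  have hzero : ∀ m : ℕ, f m - g m =
      (fun m : ℕ => (m : ℝ) *
        ((x / 2) ^ (2 * (m : ℝ) + α - 1) / ((m.factorial : ℝ) * Real.Gamma (α + m + 1)))) m :=
    hpoint
  have hsh' : Summable (fun m : ℕ => (m : ℝ) *
      ((x / 2) ^ (2 * (m : ℝ) + α - 1) / ((m.factorial : ℝ) * Real.Gamma (α + m + 1)))) := by
    exact hsh.congr hzero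
  -- tsum of h equals besselI (α+1) x
  have hshift : ∀ m : ℕ, ((m + 1 : ℕ) : ℝ) *
      ((x / 2) ^ (2 * ((m + 1 : ℕ) : ℝ) + α - 1) /
        (((m + 1).factorial : ℝ) * Real.Gamma (α + ((m + 1 : ℕ) : ℝ) + 1)))
      = (x / 2) ^ (2 * (m : ℝ) + (α + 1)) /
          ((m.factorial : ℝ) * Real.Gamma ((α + 1) + m + 1)) := by
    intro m
    have e1 : 2 * ((m + 1 : ℕ) : ℝ) + α - 1 = 2 * (m : ℝ) + (α + 1) := by push_cast; ring
    have e2 : α + ((m + 1 : ℕ) : ℝ) + 1 = (α + 1) + m + 1 := by push_cast; ring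
    rw [e1, e2, Nat.factorial_succ]
    by_cases hG : Real.Gamma ((α + 1) + m + 1) = 0
    · simp [hG]
    · push_cast
      field_simp
  have htsum_h : ∑' m : ℕ, (m : ℝ) *
      ((x / 2) ^ (2 * (m : ℝ) + α - 1) / ((m.factorial : ℝ) * Real.Gamma (α + m + 1)))
      = besselI (α + 1) x := by
    rw [hsh'.tsum_eq_zero_add]
    simp only [Nat.cast_zero, zero_mul, zero_add]
    unfold besselI
    exact tsum_congr hshift
  have htsum_g : ∑' m, g m = 2 * α / x * besselI α x := by
    unfold besselI
    exact tsum_mul_left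
  have hdiff : besselI (α - 1) x - 2 * α / x * besselI α x = besselI (α + 1) x := by
    have : ∑' m, (f m - g m) = ∑' m, f m - ∑' m, g m := hsf.tsum_sub hsg
    have h2 : ∑' m, (f m - g m) = besselI (α + 1) x := by
      rw [tsum_congr hzero]; exact htsum_h
    have h3 : ∑' m, f m = besselI (α - 1) x := rfl
    rw [h2, h3, htsum_g] at this
    linarith [this]
  linarith [hdiff]

theorem stmt1 (t μ : ℝ) (ht : 0 < t)
    (hD : ∀ N : ℕ, toeplitzDet μ 0 N t ≠ 0)
    (hv : ∀ N : ℕ, 1 ≤ N → 1 - rcoef μ N t * rbcoef μ N t ≠ 0) :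
    ∀ N : ℕ, 1 ≤ N →
      rbcoef μ N t * rcoef μ (N - 1) t - rcoef μ N t * rbcoef μ (N - 1) t
        = -2 * μ / Real.sqrt t := by
  intro N hN
  obtain ⟨n, rfl⟩ : ∃ n, N = n + 1 := ⟨N - 1, (Nat.succ_pred_eq_of_pos hN).symm⟩
  have hx : (0 : ℝ) < Real.sqrt t := Real.sqrt_pos.mpr ht
  set x := Real.sqrt t with hxdef
  have hxne : x ≠ 0 := ne_of_gt hx
  set c : ℝ → ℝ := fun s => besselI (μ + s) x with hc
  have hrec : ∀ s : ℝ, c (-1 + s) - c (1 + s) = (2 * μ / x) * c s + (2 / x) * (s * c s) := by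
    intro s
    have h := besselI_rec hx (μ + s)
    have e1 : μ + s - 1 = μ + (-1 + s) := by ring
    have e2 : μ + s + 1 = μ + (1 + s) := by ring
    rw [e1, e2] at h
    show besselI (μ + (-1 + s)) x - besselI (μ + (1 + s)) x = _
    rw [h]
    show 2 * (μ + s) / x * besselI (μ + s) x
        = 2 * μ / x * besselI (μ + s) x + 2 / x * (s * besselI (μ + s) x)
    ring
  have keyT : ∀ (e : ℤ) (m : ℕ), toeplitzDet μ e m t = (tM c (e : ℝ) m).det := by
    intro e m
    unfold toeplitzDet tM
    congr 1
    ext j k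
    simp only [Matrix.of_apply]
    rw [← hxdef]
    show besselI (μ + (e : ℝ) + ((j : ℕ) : ℝ) - ((k : ℕ) : ℝ)) x
        = besselI (μ + ((e : ℝ) + ((j : ℕ) : ℝ) - ((k : ℕ) : ℝ))) x
    congr 1
    ring
  have main := toeplitz_key c (2 * μ / x) (2 / x) hrec n
  simp only [Nat.add_sub_cancel]
  unfold rcoef rbcoef
  rw [keyT 1 (n + 1), keyT (-1) (n + 1), keyT 0 (n + 1), keyT 1 n, keyT (-1) n, keyT 0 n]
  simp only [Int.cast_one, Int.cast_neg, Int.cast_zero]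
  have hR : (tM c 0 (n + 1)).det ≠ 0 := by
    have h := hD (n + 1)
    rwa [keyT 0 (n + 1), Int.cast_zero] at h
  have hr : (tM c 0 n).det ≠ 0 := by
    have h := hD n
    rwa [keyT 0 n, Int.cast_zero] at h
  have hsq : (-1 : ℝ) ^ (n + 1) * (-1 : ℝ) ^ n = -1 := by
    rw [← pow_add, show n + 1 + n = 2 * n + 1 by ring, pow_succ, pow_mul]
    norm_num
  have main' : ((tM c (-1) (n + 1)).det * (tM c 1 n).det
      - (tM c 1 (n + 1)).det * (tM c (-1) n).det) * x
      = 2 * μ * ((tM c 0 (n + 1)).det * (tM c 0 n).det) := by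
    rw [main]
    field_simp
  rw [div_mul_div_comm, div_mul_div_comm, div_sub_div_same,
    div_eq_div_iff (mul_ne_zero hR hr) hxne]
  linear_combination (((tM c (-1) (n + 1)).det * (tM c 1 n).det
      - (tM c 1 (n + 1)).det * (tM c (-1) n).det) * x) * hsq - main'
end

section
/- For every integer N ≥ 0 one has the summed relation (√t/2)·Σ_{j=0}^{N−1} ( r̄_{j+1} r_j − r_{j+1} r̄_j ) + μ·N = 0. -/
open scoped BigOperators

namespace Stmt3Aux
open Matrix

variable (a : ℤ → ℝ)


lemma one_div_Gamma_eq (y : ℝ) : 1 / Real.Gamma y = y / Real.Gamma (y + 1) := by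
  rcases eq_or_ne y 0 with hy | hy
  · simp [hy, Real.Gamma_zero]
  · rw [Real.Gamma_add_one hy]
    rcases eq_or_ne (Real.Gamma y) 0 with hg | hg
    · simp [hg]
    · field_simp

/-- base summability -/
lemma summable_bterm (q e g : ℝ) (hq : 0 < q) :
    Summable (fun m : ℕ => q ^ (2 * (m : ℝ) + e) / ((m.factorial : ℝ) * Real.Gamma (g + m))) := by
  set f : ℕ → ℝ := fun m => q ^ (2 * (m : ℝ) + e) / ((m.factorial : ℝ) * Real.Gamma (g + m))
    with hf
  apply summable_of_ratio_norm_eventually_le (r := 1/2) (by norm_num)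
  rw [Filter.eventually_atTop]
  refine ⟨max ⌈1 - g⌉₊ ⌈2 * q ^ 2⌉₊, fun m hm => ?_⟩
  have hm1 : (1 : ℝ) - g ≤ m := le_trans (Nat.le_ceil _)
    (by exact_mod_cast le_trans (le_max_left _ _) hm)
  have hm2 : 2 * q ^ 2 ≤ m := le_trans (Nat.le_ceil _)
    (by exact_mod_cast le_trans (le_max_right _ _) hm)
  have hgm : (1 : ℝ) ≤ g + m := by linarith
  have hgm0 : (0 : ℝ) < g + m := by linarith
  have hGpos : 0 < Real.Gamma (g + m) := Real.Gamma_pos_of_pos hgm0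
  have hfac : (0 : ℝ) < (m.factorial : ℝ) := by exact_mod_cast m.factorial_pos
  have hstep : f (m + 1) = f m * (q ^ 2 / ((m + 1) * (g + m))) := by
    have hGam : Real.Gamma (g + (m + 1 : ℕ)) = (g + m) * Real.Gamma (g + m) := by
      push_cast
      rw [show g + ((m : ℝ) + 1) = (g + m) + 1 by ring, Real.Gamma_add_one hgm0.ne']
    have hpow : q ^ (2 * ((m + 1 : ℕ) : ℝ) + e) = q ^ (2 * (m : ℝ) + e) * q ^ (2 : ℝ) := by
      rw [← Real.rpow_add hq]
      push_cast; ring_nf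
    have hfacs : ((m + 1).factorial : ℝ) = (m + 1) * m.factorial := by
      push_cast [Nat.factorial_succ]; ring
    rw [hf]
    simp only []
    rw [hGam, hpow, hfacs]
    rw [Real.rpow_two]
    field_simp
  rw [hstep]
  have hc : 0 ≤ q ^ 2 / ((m + 1) * (g + m)) := by positivity
  rw [norm_mul, Real.norm_eq_abs (q ^ 2 / _), abs_of_nonneg hc]
  have hle : q ^ 2 / (((m : ℝ) + 1) * (g + m)) ≤ 1 / 2 := by
    rw [div_le_div_iff₀ (by positivity) (by norm_num)]
    nlinarith [sq_nonneg q]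
  calc ‖f m‖ * (q ^ 2 / (((m : ℝ) + 1) * (g + m))) ≤ ‖f m‖ * (1/2) := by
        exact mul_le_mul_of_nonneg_left hle (norm_nonneg _)
    _ = 1/2 * ‖f m‖ := by ring



lemma succ_mul_bterm (q e g : ℝ) (m : ℕ) :
    ((m + 1 : ℕ) : ℝ) * (q ^ (2 * ((m + 1 : ℕ) : ℝ) + e) / (((m + 1).factorial : ℝ) * Real.Gamma (g + ((m + 1 : ℕ) : ℝ))))
      = q ^ (2 * (m : ℝ) + (e + 2)) / ((m.factorial : ℝ) * Real.Gamma ((g + 1) + m)) := by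
  have hfacs : ((m + 1).factorial : ℝ) = ((m : ℝ) + 1) * m.factorial := by
    push_cast [Nat.factorial_succ]; ring
  have hpow : q ^ (2 * ((m + 1 : ℕ) : ℝ) + e) = q ^ (2 * (m : ℝ) + (e + 2)) := by
    push_cast; ring_nf
  have hGam : Real.Gamma (g + ((m + 1 : ℕ) : ℝ)) = Real.Gamma ((g + 1) + m) := by
    push_cast; ring_nf
  rw [hfacs, hpow, hGam]
  have h1 : ((m : ℝ) + 1) ≠ 0 := by positivity
  rcases eq_or_ne (Real.Gamma ((g + 1) + m)) 0 with hG | hG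
  · simp [hG]
  · have h2 : (m.factorial : ℝ) ≠ 0 := by positivity
    field_simp
    push_cast
    ring

lemma summable_mul_bterm (q e g : ℝ) (hq : 0 < q) :
    Summable (fun m : ℕ => (m : ℝ) * (q ^ (2 * (m : ℝ) + e) / ((m.factorial : ℝ) * Real.Gamma (g + m)))) := by
  rw [← summable_nat_add_iff 1]
  have : (fun m : ℕ => ((m + 1 : ℕ) : ℝ) *
      (q ^ (2 * ((m + 1 : ℕ) : ℝ) + e) / (((m + 1).factorial : ℝ) * Real.Gamma (g + ((m + 1 : ℕ) : ℝ)))))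
      = fun m : ℕ => q ^ (2 * (m : ℝ) + (e + 2)) / ((m.factorial : ℝ) * Real.Gamma ((g + 1) + m)) := by
    funext m; exact succ_mul_bterm q e g m
  rw [show (fun m : ℕ => ((m + 1 : ℕ) : ℝ) *
      (q ^ (2 * ((m + 1 : ℕ) : ℝ) + e) / (((m + 1).factorial : ℝ) * Real.Gamma (g + ((m + 1 : ℕ) : ℝ)))))
      = fun m : ℕ => q ^ (2 * (m : ℝ) + (e + 2)) / ((m.factorial : ℝ) * Real.Gamma ((g + 1) + m)) from this]
  exact summable_bterm q (e + 2) (g + 1) hq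

lemma besselI_rec (α x : ℝ) (hx : 0 < x) :
    x / 2 * (besselI (α - 1) x - besselI (α + 1) x) = α * besselI α x := by
  have hq : 0 < x / 2 := by positivity
  set q := x / 2 with hqdef
  set b : ℕ → ℝ := fun m => q ^ (2 * (m : ℝ) + (α - 1)) / ((m.factorial : ℝ) * Real.Gamma ((α + 1) + m)) with hb
  have hsb : Summable b := summable_bterm q (α - 1) (α + 1) hq
  have hsmb : Summable (fun m : ℕ => (m : ℝ) * b m) := summable_mul_bterm q (α - 1) (α + 1) hq
  have hF1 : Summable (fun m : ℕ => (α + m) * b m) := by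
    have he : (fun m : ℕ => (α + m) * b m) = fun m => α * b m + (m : ℝ) * b m := by
      funext m; ring
    rw [he]
    exact Summable.add (hsb.mul_left α) hsmb
  have h1 : besselI (α - 1) x = ∑' m : ℕ, (α + m) * b m := by
    rw [besselI]
    apply tsum_congr
    intro m
    have harg : α - 1 + (m : ℝ) + 1 = α + m := by ring
    rw [harg]
    have key := one_div_Gamma_eq (α + m)
    rw [show (α + (m : ℝ)) + 1 = (α + 1) + m by ring] at key
    calc q ^ (2 * (m : ℝ) + (α - 1)) / ((m.factorial : ℝ) * Real.Gamma (α + m))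
        = q ^ (2 * (m : ℝ) + (α - 1)) / (m.factorial : ℝ) * (1 / Real.Gamma (α + m)) := by
          rw [div_mul_div_comm]; ring_nf
      _ = q ^ (2 * (m : ℝ) + (α - 1)) / (m.factorial : ℝ) * ((α + m) / Real.Gamma ((α + 1) + m)) := by
          rw [key]
      _ = (α + m) * b m := by rw [hb]; simp only []; rw [div_mul_div_comm]; ring
  have h2 : besselI (α + 1) x = ∑' m : ℕ, (m : ℝ) * b m := by
    rw [Summable.tsum_eq_zero_add hsmb]
    simp only [Nat.cast_zero, zero_mul, zero_add]
    rw [besselI]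
    apply tsum_congr
    intro m
    have := succ_mul_bterm q (α - 1) (α + 1) m
    rw [hb]
    simp only []
    rw [this]
    have harg1 : α - 1 + 2 = α + 1 := by ring
    have harg2 : (α + 1) + 1 + (m : ℝ) = α + 1 + m + 1 := by ring
    rw [harg1, harg2]
  have h4 : besselI α x = ∑' m : ℕ, q * b m := by
    rw [besselI]
    apply tsum_congr
    intro m
    rw [hb]
    simp only []
    rw [show (α + 1) + (m : ℝ) = α + m + 1 by ring]
    rw [show 2 * (m : ℝ) + α = (2 * (m : ℝ) + (α - 1)) + 1 by ring,
        Real.rpow_add_one hq.ne' (2 * (m : ℝ) + (α - 1))]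
    ring
  rw [h1, h2, ← Summable.tsum_sub hF1 hsmb]
  have h3 : ∀ m : ℕ, (α + m) * b m - (m : ℝ) * b m = α * b m := fun m => by ring
  simp only [h3]
  rw [tsum_mul_left, h4, tsum_mul_left]
  ring

noncomputable def Tm (N : ℕ) : Matrix (Fin N) (Fin N) ℝ :=
  Matrix.of fun j k => a (((j : ℕ) : ℤ) - ((k : ℕ) : ℤ))

noncomputable def vv (N : ℕ) : Fin N → ℝ := (Tm a N)⁻¹ *ᵥ fun j : Fin N => a (((j : ℕ) : ℤ) + 1)

noncomputable def ww (N : ℕ) : Fin N → ℝ := (Tm a N)⁻¹ *ᵥ fun j : Fin N => a (((j : ℕ) : ℤ) - ((N : ℕ) : ℤ))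

lemma Tm_mulVec_vv {N : ℕ} (hdet : IsUnit (Tm a N).det) :
    Tm a N *ᵥ vv a N = fun j : Fin N => a (((j : ℕ) : ℤ) + 1) := by
  rw [vv, mulVec_mulVec, mul_nonsing_inv _ hdet, one_mulVec]

lemma Tm_mulVec_ww {N : ℕ} (hdet : IsUnit (Tm a N).det) :
    Tm a N *ᵥ ww a N = fun j : Fin N => a (((j : ℕ) : ℤ) - ((N : ℕ) : ℤ)) := by
  rw [ww, mulVec_mulVec, mul_nonsing_inv _ hdet, one_mulVec]

lemma mulVec_inj {N : ℕ} (hdet : IsUnit (Tm a N).det) {u₁ u₂ : Fin N → ℝ}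
    (h : Tm a N *ᵥ u₁ = Tm a N *ᵥ u₂) : u₁ = u₂ := by
  have h2 := congrArg (fun z => (Tm a N)⁻¹ *ᵥ z) h
  simpa [mulVec_mulVec, nonsing_inv_mul _ hdet, one_mulVec] using h2

lemma R1 {N : ℕ} (hdN : IsUnit (Tm a N).det) (hdN1 : IsUnit (Tm a (N + 1)).det) (k : Fin N) :
    ww a (N + 1) k.succ = ww a N k - ww a (N + 1) 0 * vv a N k := by
  set W := ww a (N + 1) with hW
  have hWeq := Tm_mulVec_ww a hdN1
  have key : Tm a N *ᵥ (fun k => W k.succ) = Tm a N *ᵥ (ww a N - W 0 • vv a N) := by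
    rw [mulVec_sub, mulVec_smul, Tm_mulVec_ww a hdN, Tm_mulVec_vv a hdN]
    funext j
    have hrow := congrFun hWeq j.succ
    rw [mulVec, dotProduct] at hrow
    rw [Fin.sum_univ_succ] at hrow
    have hT0 : Tm a (N + 1) j.succ 0 = a (((j : ℕ) : ℤ) + 1) := by
      simp [Tm]
    have hTk : ∀ k' : Fin N, Tm a (N + 1) j.succ k'.succ = a (((j : ℕ) : ℤ) - ((k' : ℕ) : ℤ)) := by
      intro k'
      simp only [Tm, of_apply, Fin.val_succ]
      congr 1
      push_cast
      ring
    have hrhs : ((j.succ : ℕ) : ℤ) - ((N : ℕ) + 1 : ℕ) = ((j : ℕ) : ℤ) - (N : ℕ) := by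
      simp only [Fin.val_succ]
      push_cast
      ring
    rw [hT0, hrhs] at hrow
    simp only [hTk] at hrow
    rw [mulVec, dotProduct]
    simp only [Tm, of_apply, Pi.sub_apply, Pi.smul_apply, smul_eq_mul]
    linarith [hrow]
  have := mulVec_inj a hdN key
  have h2 := congrFun this k
  simpa using h2

lemma R2 {N : ℕ} (hdN : IsUnit (Tm a N).det) (hdN1 : IsUnit (Tm a (N + 1)).det) (k : Fin N) :
    vv a (N + 1) k.castSucc = vv a N k - vv a (N + 1) (Fin.last N) * ww a N k := by
  set V := vv a (N + 1) with hV
  have hVeq := Tm_mulVec_vv a hdN1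
  have key : Tm a N *ᵥ (fun k => V k.castSucc) = Tm a N *ᵥ (vv a N - V (Fin.last N) • ww a N) := by
    rw [mulVec_sub, mulVec_smul, Tm_mulVec_vv a hdN, Tm_mulVec_ww a hdN]
    funext j
    have hrow := congrFun hVeq j.castSucc
    rw [mulVec, dotProduct] at hrow
    rw [Fin.sum_univ_castSucc] at hrow
    have hTlast : Tm a (N + 1) j.castSucc (Fin.last N) = a (((j : ℕ) : ℤ) - ((N : ℕ) : ℤ)) := by
      simp [Tm]
    have hTk : ∀ k' : Fin N, Tm a (N + 1) j.castSucc k'.castSucc = a (((j : ℕ) : ℤ) - ((k' : ℕ) : ℤ)) := by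
      intro k'
      simp [Tm]
    have hrhs : ((j.castSucc : ℕ) : ℤ) + 1 = ((j : ℕ) : ℤ) + 1 := by simp
    rw [hTlast, hrhs] at hrow
    simp only [hTk] at hrow
    rw [mulVec, dotProduct]
    simp only [Tm, of_apply, Pi.sub_apply, Pi.smul_apply, smul_eq_mul]
    linarith [hrow]
  have := mulVec_inj a hdN key
  have h2 := congrFun this k
  simpa using h2


open Matrix





lemma TI (x μ : ℝ) (hrec : ∀ n : ℤ, x / 2 * (a (n - 1) - a (n + 1)) = (μ + n) * a n)
    {N : ℕ} (hd : IsUnit (Tm a (N + 1)).det) :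
    x / 2 * (ww a (N + 1) (Fin.last N) - vv a (N + 1) 0) = μ * (N + 1) := by
  set n := N + 1 with hn
  set T := Tm a n with hT
  set G := T⁻¹ with hG
  have hGT : G * T = 1 := nonsing_inv_mul _ hd
  have hTG : T * G = 1 := mul_nonsing_inv _ hd
  -- the zero sum
  have S0 : ∑ k : Fin n, ∑ j : Fin n, G k j * (((j : ℕ) : ℝ) - ((k : ℕ) : ℝ)) * a (((j:ℕ):ℤ) - ((k:ℕ):ℤ)) = 0 := by
    have e1 : ∀ k j : Fin n, G k j * (((j : ℕ) : ℝ) - ((k : ℕ) : ℝ)) * a (((j:ℕ):ℤ) - ((k:ℕ):ℤ))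
        = ((j : ℕ) : ℝ) * (T j k * G k j) - ((k : ℕ) : ℝ) * (T j k * G k j) := by
      intro k j
      rw [hT]
      simp only [Tm, of_apply]
      ring
    simp only [e1]
    simp only [Finset.sum_sub_distrib]
    have hA : ∑ k : Fin n, ∑ j : Fin n, ((j : ℕ) : ℝ) * (T j k * G k j)
        = ∑ j : Fin n, ((j : ℕ) : ℝ) := by
      rw [Finset.sum_comm]
      apply Finset.sum_congr rfl
      intro j _
      rw [← Finset.mul_sum]
      have : ∑ k : Fin n, T j k * G k j = (T * G) j j := by rw [mul_apply]
      rw [this, hTG, one_apply_eq, mul_one]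
    have hB : ∑ k : Fin n, ∑ j : Fin n, ((k : ℕ) : ℝ) * (T j k * G k j)
        = ∑ k : Fin n, ((k : ℕ) : ℝ) := by
      apply Finset.sum_congr rfl
      intro k _
      rw [← Finset.mul_sum]
      have : ∑ j : Fin n, T j k * G k j = ∑ j : Fin n, G k j * T j k := by
        apply Finset.sum_congr rfl; intros; ring
      rw [this]
      have : ∑ j : Fin n, G k j * T j k = (G * T) k k := by rw [mul_apply]
      rw [this, hGT, one_apply_eq, mul_one]
    rw [hA, hB, sub_self]
  -- S1
  have S1 : ∑ k : Fin n, ∑ j : Fin n, G k j * a (((j:ℕ):ℤ) - ((k:ℕ):ℤ) - 1) = ww a n (Fin.last N) := by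
    rw [Fin.sum_univ_castSucc]
    have hzero : ∀ i : Fin N, ∑ j : Fin n, G i.castSucc j * a (((j:ℕ):ℤ) - ((i.castSucc:ℕ):ℤ) - 1) = 0 := by
      intro i
      have he : ∀ j : Fin n, a (((j:ℕ):ℤ) - ((i.castSucc:ℕ):ℤ) - 1) = T j i.succ := by
        intro j
        rw [hT]
        simp only [Tm, of_apply, Fin.coe_castSucc, Fin.val_succ]
        congr 1
        push_cast
        ring
      simp only [he]
      have : ∑ j : Fin n, G i.castSucc j * T j i.succ = (G * T) i.castSucc i.succ := by
        rw [mul_apply]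
      rw [this, hGT]
      exact one_apply_ne (Fin.castSucc_lt_succ : i.castSucc < i.succ).ne
    rw [Finset.sum_congr rfl (fun i _ => hzero i), Finset.sum_const_zero, zero_add]
    have he2 : ∀ j : Fin n, a (((j:ℕ):ℤ) - (((Fin.last N : Fin n):ℕ):ℤ) - 1) = a (((j:ℕ):ℤ) - ((n:ℕ):ℤ)) := by
      intro j
      congr 1
      simp only [Fin.val_last]
      push_cast [hn]
      ring
    simp only [he2]
    have : ∑ j : Fin n, G (Fin.last N) j * a (((j:ℕ):ℤ) - ((n:ℕ):ℤ))
        = (G *ᵥ fun j : Fin n => a (((j:ℕ):ℤ) - ((n:ℕ):ℤ))) (Fin.last N) := by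
      rw [mulVec, dotProduct]
    rw [this]
    rfl
  -- S2
  have S2 : ∑ k : Fin n, ∑ j : Fin n, G k j * a (((j:ℕ):ℤ) - ((k:ℕ):ℤ) + 1) = vv a n 0 := by
    rw [Fin.sum_univ_succ]
    have hzero : ∀ i : Fin N, ∑ j : Fin n, G i.succ j * a (((j:ℕ):ℤ) - ((i.succ:ℕ):ℤ) + 1) = 0 := by
      intro i
      have he : ∀ j : Fin n, a (((j:ℕ):ℤ) - ((i.succ:ℕ):ℤ) + 1) = T j i.castSucc := by
        intro j
        rw [hT]
        simp only [Tm, of_apply, Fin.coe_castSucc, Fin.val_succ]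
        congr 1
        push_cast
        ring
      simp only [he]
      have : ∑ j : Fin n, G i.succ j * T j i.castSucc = (G * T) i.succ i.castSucc := by
        rw [mul_apply]
      rw [this, hGT]
      exact one_apply_ne (Fin.castSucc_lt_succ : i.castSucc < i.succ).ne'
    rw [Finset.sum_congr rfl (fun i _ => hzero i), Finset.sum_const_zero, add_zero]
    have he2 : ∀ j : Fin n, a (((j:ℕ):ℤ) - (((0 : Fin n):ℕ):ℤ) + 1) = a (((j:ℕ):ℤ) + 1) := by
      intro j
      norm_num
    simp only [he2]
    have : ∑ j : Fin n, G 0 j * a (((j:ℕ):ℤ) + 1)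
        = (G *ᵥ fun j : Fin n => a (((j:ℕ):ℤ) + 1)) 0 := by
      rw [mulVec, dotProduct]
    rw [this]
    rfl
  -- SN
  have SN : ∑ k : Fin n, ∑ j : Fin n, G k j * a (((j:ℕ):ℤ) - ((k:ℕ):ℤ)) = (n : ℝ) := by
    have he : ∀ k : Fin n, ∑ j : Fin n, G k j * a (((j:ℕ):ℤ) - ((k:ℕ):ℤ)) = (1 : ℝ) := by
      intro k
      have : ∑ j : Fin n, G k j * T j k = (G * T) k k := by rw [mul_apply]
      have he2 : ∀ j : Fin n, a (((j:ℕ):ℤ) - ((k:ℕ):ℤ)) = T j k := by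
        intro j; rw [hT]; simp [Tm]
      simp only [he2]
      rw [this, hGT, one_apply_eq]
    rw [Finset.sum_congr rfl (fun k _ => he k)]
    simp
  -- combine using the recurrence
  have key : ∀ k j : Fin n,
      G k j * (((j : ℕ) : ℝ) - ((k : ℕ) : ℝ)) * a (((j:ℕ):ℤ) - ((k:ℕ):ℤ))
      = x / 2 * (G k j * a (((j:ℕ):ℤ) - ((k:ℕ):ℤ) - 1)) - x / 2 * (G k j * a (((j:ℕ):ℤ) - ((k:ℕ):ℤ) + 1))
        - μ * (G k j * a (((j:ℕ):ℤ) - ((k:ℕ):ℤ))) := by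
    intro k j
    have h := hrec (((j:ℕ):ℤ) - ((k:ℕ):ℤ))
    have hcast : ((((j:ℕ):ℤ) - ((k:ℕ):ℤ) : ℤ) : ℝ) = ((j : ℕ) : ℝ) - ((k : ℕ) : ℝ) := by push_cast; ring
    rw [hcast] at h
    linear_combination (-(G k j)) * h
  have bigsum : (0 : ℝ) = x / 2 * (∑ k : Fin n, ∑ j : Fin n, G k j * a (((j:ℕ):ℤ) - ((k:ℕ):ℤ) - 1))
      - x / 2 * (∑ k : Fin n, ∑ j : Fin n, G k j * a (((j:ℕ):ℤ) - ((k:ℕ):ℤ) + 1))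
      - μ * (∑ k : Fin n, ∑ j : Fin n, G k j * a (((j:ℕ):ℤ) - ((k:ℕ):ℤ))) := by
    calc (0:ℝ) = ∑ k : Fin n, ∑ j : Fin n, G k j * (((j : ℕ) : ℝ) - ((k : ℕ) : ℝ)) * a (((j:ℕ):ℤ) - ((k:ℕ):ℤ)) := S0.symm
      _ = ∑ k : Fin n, ∑ j : Fin n, (x / 2 * (G k j * a (((j:ℕ):ℤ) - ((k:ℕ):ℤ) - 1))
            - x / 2 * (G k j * a (((j:ℕ):ℤ) - ((k:ℕ):ℤ) + 1))
            - μ * (G k j * a (((j:ℕ):ℤ) - ((k:ℕ):ℤ)))) :=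
          Finset.sum_congr rfl fun k _ => Finset.sum_congr rfl fun j _ => key k j
      _ = _ := by simp only [Finset.sum_sub_distrib, ← Finset.mul_sum]
  rw [S1, S2, SN] at bigsum
  have : (n : ℝ) = (N : ℝ) + 1 := by rw [hn]; push_cast; ring
  rw [this] at bigsum
  linarith [bigsum]


open Matrix

lemma inv_mulVec_apply {N : ℕ} (A : Matrix (Fin N) (Fin N) ℝ) (b : Fin N → ℝ) (i : Fin N) :
    (A⁻¹ *ᵥ b) i = A.det⁻¹ * (A.updateCol i b).det := by
  rw [inv_def, smul_mulVec, ← cramer_eq_adjugate_mulVec]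
  simp [Ring.inverse_eq_inv, cramer_apply]

section besselLink
variable (μ t : ℝ)

noncomputable def aB : ℤ → ℝ := fun n => besselI (μ + n) (Real.sqrt t)

lemma det_Tm_eq (N : ℕ) : (Tm (aB μ t) N).det = toeplitzDet μ 0 N t := by
  unfold toeplitzDet
  congr 1
  ext j k
  simp only [Tm, aB, of_apply]
  congr 1
  push_cast
  ring

lemma sign_cast (M : ℕ) :
    ((↑(Equiv.Perm.sign (finRotate (M + 1))) : ℝ)) = (-1 : ℝ) ^ M := by
  rw [sign_finRotate]
  push_cast
  ring

lemma updateColumn_last_eq (M : ℕ) :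
    ((Tm (aB μ t) (M + 1)).updateCol (Fin.last M)
      (fun j : Fin (M + 1) => aB μ t (((j : ℕ) : ℤ) + 1))).det
    = (-1 : ℝ) ^ M * toeplitzDet μ 1 (M + 1) t := by
  have hM1 : toeplitzDet μ 1 (M + 1) t
      = (Matrix.of fun j k : Fin (M + 1) => aB μ t (1 + ((j : ℕ) : ℤ) - ((k : ℕ) : ℤ))).det := by
    unfold toeplitzDet
    congr 1
    ext j k
    simp only [aB, of_apply]
    congr 1
    push_cast
    ring
  have hsub : ((Matrix.of fun j k : Fin (M + 1) =>
        aB μ t (1 + ((j : ℕ) : ℤ) - ((k : ℕ) : ℤ))).submatrix id (finRotate (M + 1)))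
      = (Tm (aB μ t) (M + 1)).updateCol (Fin.last M)
        (fun j : Fin (M + 1) => aB μ t (((j : ℕ) : ℤ) + 1)) := by
    ext j k
    rw [submatrix_apply, id_eq, finRotate_succ_apply, updateCol_apply]
    rcases eq_or_ne k (Fin.last M) with hk | hk
    · subst hk
      rw [if_pos rfl]
      simp only [of_apply]
      rw [Fin.last_add_one]
      norm_num
      congr 1
      ring
    · rw [if_neg hk]
      simp only [of_apply, Tm]
      congr 1
      have : ((k + 1 : Fin (M + 1)) : ℕ) = (k : ℕ) + 1 := by
        rw [Fin.val_add_one]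
        simp [hk]
      rw [this]
      push_cast
      ring
  calc ((Tm (aB μ t) (M + 1)).updateCol (Fin.last M)
        (fun j : Fin (M + 1) => aB μ t (((j : ℕ) : ℤ) + 1))).det
      = ((Matrix.of fun j k : Fin (M + 1) =>
          aB μ t (1 + ((j : ℕ) : ℤ) - ((k : ℕ) : ℤ))).submatrix id (finRotate (M + 1))).det := by
        rw [hsub]
    _ = (-1 : ℝ) ^ M * toeplitzDet μ 1 (M + 1) t := by
        rw [det_permute', hM1, sign_cast]

lemma updateColumn_zero_eq (M : ℕ) :
    ((Tm (aB μ t) (M + 1)).updateCol 0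
      (fun j : Fin (M + 1) => aB μ t (((j : ℕ) : ℤ) - ((M + 1 : ℕ) : ℤ)))).det
    = (-1 : ℝ) ^ M * toeplitzDet μ (-1) (M + 1) t := by
  have hM2 : toeplitzDet μ (-1) (M + 1) t
      = (Matrix.of fun j k : Fin (M + 1) => aB μ t (-1 + ((j : ℕ) : ℤ) - ((k : ℕ) : ℤ))).det := by
    unfold toeplitzDet
    congr 1
    ext j k
    simp only [aB, of_apply]
    congr 1
    push_cast
    ring
  have hsub : (((Tm (aB μ t) (M + 1)).updateCol 0
        (fun j : Fin (M + 1) => aB μ t (((j : ℕ) : ℤ) - ((M + 1 : ℕ) : ℤ)))).submatrix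
          id (finRotate (M + 1)))
      = (Matrix.of fun j k : Fin (M + 1) => aB μ t (-1 + ((j : ℕ) : ℤ) - ((k : ℕ) : ℤ))) := by
    ext j k
    rw [submatrix_apply, id_eq, finRotate_succ_apply, updateCol_apply]
    rcases eq_or_ne k (Fin.last M) with hk | hk
    · subst hk
      rw [Fin.last_add_one, if_pos rfl]
      simp only [of_apply, Fin.val_last]
      congr 1
      push_cast
      ring
    · have hne : (k + 1 : Fin (M + 1)) ≠ 0 := by
        intro h
        apply hk
        have h2 : k = -1 := by
          have := congrArg (fun z : Fin (M + 1) => z - 1) h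
          simpa using this
        rw [h2]
        exact (eq_neg_of_add_eq_zero_left (Fin.last_add_one M)).symm
      rw [if_neg hne]
      simp only [of_apply, Tm]
      congr 1
      have : ((k + 1 : Fin (M + 1)) : ℕ) = (k : ℕ) + 1 := by
        rw [Fin.val_add_one]
        simp [hk]
      rw [this]
      push_cast
      ring
  have h1 : (((Tm (aB μ t) (M + 1)).updateCol 0
        (fun j : Fin (M + 1) => aB μ t (((j : ℕ) : ℤ) - ((M + 1 : ℕ) : ℤ)))).submatrix
          id (finRotate (M + 1))).det = toeplitzDet μ (-1) (M + 1) t := by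
    rw [hsub, ← hM2]
  rw [det_permute', sign_cast] at h1
  have hpm : (-1 : ℝ) ^ M * ((-1 : ℝ) ^ M) = 1 := by
    rw [← pow_add]
    exact Even.neg_one_pow ⟨M, rfl⟩
  calc ((Tm (aB μ t) (M + 1)).updateCol 0
        (fun j : Fin (M + 1) => aB μ t (((j : ℕ) : ℤ) - ((M + 1 : ℕ) : ℤ)))).det
      = ((-1 : ℝ) ^ M * ((-1 : ℝ) ^ M)) * ((Tm (aB μ t) (M + 1)).updateCol 0
        (fun j : Fin (M + 1) => aB μ t (((j : ℕ) : ℤ) - ((M + 1 : ℕ) : ℤ)))).det := by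
        rw [hpm, one_mul]
    _ = (-1 : ℝ) ^ M * toeplitzDet μ (-1) (M + 1) t := by
        rw [mul_assoc, h1]

end besselLink

section linkCoef
variable (μ t : ℝ)

lemma rcoef_eq (M : ℕ) (hD0 : toeplitzDet μ 0 (M + 1) t ≠ 0) :
    rcoef μ (M + 1) t = - vv (aB μ t) (M + 1) (Fin.last M) := by
  rw [vv, inv_mulVec_apply, det_Tm_eq, updateColumn_last_eq, rcoef]
  field_simp
  ring

lemma rbcoef_eq (M : ℕ) (hD0 : toeplitzDet μ 0 (M + 1) t ≠ 0) :
    rbcoef μ (M + 1) t = - ww (aB μ t) (M + 1) 0 := by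
  rw [ww, inv_mulVec_apply, det_Tm_eq, updateColumn_zero_eq, rbcoef]
  field_simp
  ring

end linkCoef
end Stmt3Aux

theorem stmt3 (t μ : ℝ) (ht : 0 < t)
    (hD : ∀ N : ℕ, toeplitzDet μ 0 N t ≠ 0)
    (hv : ∀ N : ℕ, 1 ≤ N → 1 - rcoef μ N t * rbcoef μ N t ≠ 0) :
    ∀ N : ℕ,
      Real.sqrt t / 2 *
          (∑ j ∈ Finset.range N,
            (rbcoef μ (j + 1) t * rcoef μ j t - rcoef μ (j + 1) t * rbcoef μ j t))
        + μ * (N : ℝ) = 0 := by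
  classical
  clear hv
  have hx : 0 < Real.sqrt t := Real.sqrt_pos.mpr ht
  set x := Real.sqrt t with hxdef
  set A := Stmt3Aux.aB μ t with hA
  have hrec : ∀ n : ℤ, x / 2 * (A (n - 1) - A (n + 1)) = (μ + n) * A n := by
    intro n
    have h := Stmt3Aux.besselI_rec (μ + n) x hx
    have h1 : (μ + (n : ℝ)) - 1 = μ + ((n - 1 : ℤ) : ℝ) := by push_cast; ring
    have h2 : (μ + (n : ℝ)) + 1 = μ + ((n + 1 : ℤ) : ℝ) := by push_cast; ring
    rw [h1, h2] at h
    simpa [hA, Stmt3Aux.aB, hxdef] using h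
  have hunit : ∀ N : ℕ, IsUnit (Stmt3Aux.Tm A N).det := by
    intro N
    rw [hA, Stmt3Aux.det_Tm_eq]
    exact isUnit_iff_ne_zero.mpr (hD N)
  have hloc : ∀ j : ℕ, x / 2 *
      (rbcoef μ (j + 1) t * rcoef μ j t - rcoef μ (j + 1) t * rbcoef μ j t) = -μ := by
    intro j
    cases j with
    | zero =>
      have h0 : rcoef μ 0 t = 1 := by
        simp [rcoef, toeplitzDet, Matrix.det_fin_zero]
      have h0' : rbcoef μ 0 t = 1 := by
        simp [rbcoef, toeplitzDet, Matrix.det_fin_zero]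
      have hr := Stmt3Aux.rcoef_eq μ t 0 (hD 1)
      have hrb := Stmt3Aux.rbcoef_eq μ t 0 (hD 1)
      have hti := Stmt3Aux.TI A x μ hrec (N := 0) (hunit 1)
      rw [← hA] at hr hrb
      have hlast : (Fin.last 0 : Fin 1) = 0 := rfl
      rw [hlast] at hr hti
      rw [h0, h0', mul_one, mul_one, hr, hrb]
      push_cast at hti
      linarith [hti]
    | succ M =>
      have hr1 := Stmt3Aux.rcoef_eq μ t M (hD (M + 1))
      have hrb1 := Stmt3Aux.rbcoef_eq μ t M (hD (M + 1))
      have hr2 := Stmt3Aux.rcoef_eq μ t (M + 1) (hD (M + 2))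
      have hrb2 := Stmt3Aux.rbcoef_eq μ t (M + 1) (hD (M + 2))
      rw [← hA] at hr1 hrb1 hr2 hrb2
      have hR1 := Stmt3Aux.R1 A (hunit (M + 1)) (hunit (M + 2)) (Fin.last M)
      have hR2 := Stmt3Aux.R2 A (hunit (M + 1)) (hunit (M + 2)) (0 : Fin (M + 1))
      rw [Fin.succ_last] at hR1
      rw [Fin.castSucc_zero] at hR2
      have hti1 := Stmt3Aux.TI A x μ hrec (N := M) (hunit (M + 1))
      have hti2 := Stmt3Aux.TI A x μ hrec (N := M + 1) (hunit (M + 2))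
      rw [hr1, hrb1, hr2, hrb2]
      push_cast at hti1 hti2 ⊢
      linear_combination (x / 2) * hR1 - (x / 2) * hR2 + hti1 - hti2
  intro N
  rw [Finset.mul_sum]
  rw [Finset.sum_congr rfl (fun j _ => hloc j)]
  simp only [Finset.sum_const, Finset.card_range, smul_eq_mul]
  ring
end
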